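/- For every vertex v of a finite graph and every d ≥ 0, f(v) ≥ f_d(v) − γ_{d+1}(v) + (d+2)·(r(v) − n_d(v)), where f(v) is the farness of v, f_d(v) the farness restricted to vertices at distance ≤ d, γ_{d+1}(v) the number of vertices at distance exactly d+1, r(v) the number of vertices reachable from v, and n_d(v) the number of vertices at distance ≤ d from v. -/

import Mathlib

open Finset

variable {V : Type*}

/-- `steps r n v w` : there is a walk of length `n` from `v` to `w` along relation `r`. -/
def steps (r : V → V → Prop) : ℕ → V → V → Prop
  | 0, v, w => v = w
  | n+1, v, w => ∃ u, r v u ∧ steps r n u w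

/-- `w` is reachable from `v`. -/
def reach (r : V → V → Prop) (v w : V) : Prop := ∃ n, steps r n v w

/-- shortest-path distance (number of edges). -/
noncomputable def ddist (r : V → V → Prop) (v w : V) : ℕ := sInf {n | steps r n v w}

open scoped Classical in
/-- set of vertices reachable from `v`. -/
noncomputable def Rset (r : V → V → Prop) [Fintype V] (v : V) : Finset V :=
  univ.filter (fun w => reach r v w)

/-- number of vertices reachable from `v`. -/
noncomputable def rnum (r : V → V → Prop) [Fintype V] (v : V) : ℕ := (Rset r v).card

/-- farness of `v`. -/
noncomputable def farn (r : V → V → Prop) [Fintype V] (v : V) : ℕ :=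
  ∑ w ∈ Rset r v, ddist r v w

open scoped Classical in
/-- ball of radius `d` around `v`. -/
noncomputable def ball (r : V → V → Prop) [Fintype V] (v : V) (d : ℕ) : Finset V :=
  univ.filter (fun w => reach r v w ∧ ddist r v w ≤ d)

/-- number of vertices at distance at most `d` from `v`. -/
noncomputable def nball (r : V → V → Prop) [Fintype V] (v : V) (d : ℕ) : ℕ := (ball r v d).card

open scoped Classical in
/-- set of vertices at distance exactly `d` from `v`. -/
noncomputable def sphere (r : V → V → Prop) [Fintype V] (v : V) (d : ℕ) : Finset V :=
  univ.filter (fun w => reach r v w ∧ ddist r v w = d)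

/-- number of vertices at distance exactly `d` from `v`. -/
noncomputable def gam (r : V → V → Prop) [Fintype V] (v : V) (d : ℕ) : ℕ := (sphere r v d).card

/-- farness of `v` restricted to distance at most `d`. -/
noncomputable def fd (r : V → V → Prop) [Fintype V] (v : V) (d : ℕ) : ℕ :=
  ∑ w ∈ ball r v d, ddist r v w

open scoped Classical in
/-- out-degree of `u`. -/
noncomputable def outdeg (r : V → V → Prop) [Fintype V] (u : V) : ℕ :=
  (univ.filter (fun w => r u w)).card

/-- `gtil r v d` = upper bound γ̃_{d+1}(v) = Σ_{u : dist(v,u)=d} outdeg(u). -/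
noncomputable def gtil (r : V → V → Prop) [Fintype V] (v : V) (d : ℕ) : ℕ :=
  ∑ u ∈ sphere r v d, outdeg r u

theorem farness_lower_bound [Fintype V] (r : V → V → Prop) (v : V) (d : ℕ) :
    (farn r v : ℤ) ≥
      (fd r v d : ℤ) - (gam r v (d + 1) : ℤ)
        + (d + 2) * ((rnum r v : ℤ) - (nball r v d : ℤ)) := by
  classical
  set B := ball r v d with hB
  set S := sphere r v (d+1) with hS
  set R := Rset r v with hR
  set T := R \ (B ∪ S) with hTdef
  have hBR : B ⊆ R := by
    intro w hw
    simp only [hB, hR, ball, Rset, mem_filter, mem_univ, true_and] at hw ⊢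
    exact hw.1
  have hSR : S ⊆ R := by
    intro w hw
    simp only [hS, hR, sphere, Rset, mem_filter, mem_univ, true_and] at hw ⊢
    exact hw.1
  have hBS : Disjoint B S := by
    rw [Finset.disjoint_left]
    intro w hwB hwS
    simp only [hB, hS, ball, sphere, mem_filter, mem_univ, true_and] at hwB hwS
    omega
  have hUS : B ∪ S ⊆ R := Finset.union_subset hBR hSR
  have hUnion : R = (B ∪ S) ∪ T := by
    rw [hTdef, Finset.union_sdiff_of_subset hUS]
  have hdisj : Disjoint (B ∪ S) T := Finset.disjoint_sdiff
  have hSsum : ∑ w ∈ S, ddist r v w = (d+1) * S.card := by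
    rw [Finset.sum_congr rfl (fun w hw => by
      simp only [hS, sphere, mem_filter] at hw
      exact hw.2.2)]
    simp [mul_comm]
  have hTsum : (d+2) * T.card ≤ ∑ w ∈ T, ddist r v w := by
    calc (d+2) * T.card = ∑ _w ∈ T, (d+2) := by simp [mul_comm]
    _ ≤ ∑ w ∈ T, ddist r v w := by
        apply Finset.sum_le_sum
        intro w hw
        simp only [hTdef, Finset.mem_sdiff, Finset.mem_union, hB, hS, ball, sphere,
          mem_filter, mem_univ, true_and] at hw
        obtain ⟨hwR, hw2⟩ := hw
        have hreach : reach r v w := by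
          simp only [hR, Rset, mem_filter, mem_univ, true_and] at hwR
          exact hwR
        push_neg at hw2
        have h1 := hw2.1 hreach
        have h2 := hw2.2 hreach
        omega
  have hfarn : farn r v = fd r v d + (d+1) * gam r v (d+1) + ∑ w ∈ T, ddist r v w := by
    rw [farn, ← hR, hUnion, Finset.sum_union hdisj, Finset.sum_union hBS, hSsum]
    rfl
  have hcard : rnum r v = nball r v d + gam r v (d+1) + T.card := by
    rw [rnum, ← hR, hUnion, Finset.card_union_of_disjoint hdisj,
      Finset.card_union_of_disjoint hBS]
    rfl
  have h1 : (farn r v : ℤ) ≥ (fd r v d : ℤ) + (d+1) * gam r v (d+1) + (d+2) * T.card := by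
    rw [hfarn]; push_cast; have := hTsum; push_cast at this ⊢; linarith
  have h2 : (rnum r v : ℤ) - (nball r v d : ℤ) = (gam r v (d+1) : ℤ) + T.card := by
    rw [hcard]; push_cast; ring
  rw [h2]
  nlinarith [h1]
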